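/- Pappus parallel-directions collinearity: let A₃, A₃′, A₅ be three collinear points and let l₃, l₃′, l₅ be three lines through a common point A₄. Let E₄ be the intersection of the line through A₃ parallel to l₅ with the line through A₅ parallel to l₃; let Ē₄ be the intersection of the line through A₃′ parallel to l₃ with the line through A₃ parallel to l₃′; let E₄′ be the intersection of the line through A₃′ parallel to l₅ with the line through A₅ parallel to l₃′. Then E₄, Ē₄, E₄′ are collinear. -/

import Mathlib

/-- Two vectors in the plane, the second nonzero and not parallel, have nonzero cross product. -/
lemma cross_ne_zero_aux {k : Type*} [Field k] (v w : k × k) (hw : w ≠ 0)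
    (h : ∀ t : k, v ≠ t • w) : v.1 * w.2 - v.2 * w.1 ≠ 0 := by
  intro hc
  rcases eq_or_ne w.1 0 with h1 | h1
  · have h2 : w.2 ≠ 0 := fun h2 => hw (Prod.ext h1 h2)
    have hv1 : v.1 = 0 := by
      have hz : v.1 * w.2 = 0 := by rw [h1] at hc; linear_combination hc
      exact (mul_eq_zero.mp hz).resolve_right h2
    refine h (v.2 / w.2) (Prod.ext ?_ ?_)
    · simp only [Prod.smul_fst, smul_eq_mul, h1, mul_zero, hv1]
    · simp only [Prod.smul_snd, smul_eq_mul]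
      field_simp
  · refine h (v.1 / w.1) (Prod.ext ?_ ?_)
    · simp only [Prod.smul_fst, smul_eq_mul]
      field_simp
    · simp only [Prod.smul_snd, smul_eq_mul]
      field_simp
      linear_combination -hc

/-- Collinearity from the vanishing of a 2×2 determinant. -/
lemma collinear_of_cross {k : Type*} [Field k] (P Q R : k × k)
    (h : (Q.1 - P.1) * (R.2 - P.2) = (Q.2 - P.2) * (R.1 - P.1)) :
    Collinear k ({P, Q, R} : Set (k × k)) := by
  rcases eq_or_ne Q P with hq | hQP
  · rw [hq, Set.insert_idem]
    exact collinear_pair k P R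
  · rw [collinear_iff_exists_forall_eq_smul_vadd]
    refine ⟨P, Q - P, ?_⟩
    intro p hp
    rcases hp with rfl | rfl | rfl
    · exact ⟨0, by simp⟩
    · exact ⟨1, by simp⟩
    · rcases eq_or_ne Q.1 P.1 with h1 | h1
      · have h2 : Q.2 ≠ P.2 := by
          intro h2; exact hQP (Prod.ext h1 h2)
        have h2' : Q.2 - P.2 ≠ 0 := sub_ne_zero.mpr h2
        have hR1 : p.1 = P.1 := by
          have hz : (Q.2 - P.2) * (p.1 - P.1) = 0 := by
            rw [← h, h1]; ring
          have := (mul_eq_zero.mp hz).resolve_left h2'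
          linear_combination this
        refine ⟨(p.2 - P.2) / (Q.2 - P.2), Prod.ext ?_ ?_⟩
        · show p.1 = ((p.2 - P.2) / (Q.2 - P.2)) • (Q - P).1 + P.1
          simp only [Prod.smul_fst, Prod.fst_sub, smul_eq_mul, h1]
          rw [hR1]; ring
        · show p.2 = ((p.2 - P.2) / (Q.2 - P.2)) • (Q - P).2 + P.2
          simp only [Prod.smul_snd, Prod.snd_sub, smul_eq_mul]
          field_simp
          ring
      · have h1' : Q.1 - P.1 ≠ 0 := sub_ne_zero.mpr h1
        refine ⟨(p.1 - P.1) / (Q.1 - P.1), Prod.ext ?_ ?_⟩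
        · show p.1 = ((p.1 - P.1) / (Q.1 - P.1)) • (Q - P).1 + P.1
          simp only [Prod.smul_fst, Prod.fst_sub, smul_eq_mul]
          field_simp
          ring
        · show p.2 = ((p.1 - P.1) / (Q.1 - P.1)) • (Q - P).2 + P.2
          simp only [Prod.smul_snd, Prod.snd_sub, smul_eq_mul]
          field_simp
          linear_combination h

/-- Pappus parallel-directions collinearity: for collinear points `A₃, A₃′, A₅` and three
pairwise non-parallel directions `v₃, v₃′, v₅` (of three lines through a common point),
the points `E₄ = (A₃ + ⟨v₅⟩) ∩ (A₅ + ⟨v₃⟩)`, `Ē₄ = (A₃′ + ⟨v₃⟩) ∩ (A₃ + ⟨v₃′⟩)` and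
`E₄′ = (A₃′ + ⟨v₅⟩) ∩ (A₅ + ⟨v₃′⟩)` are collinear. -/
theorem stmt16 {k : Type*} [Field k] (A3 A3' A5 A4 E4 E4bar E4' : k × k)
    (v3 v3' v5 : k × k)
    (hcol : Collinear k ({A3, A3', A5} : Set (k × k)))
    (hv35 : ∀ t : k, v3 ≠ t • v5) (hv3'3 : ∀ t : k, v3' ≠ t • v3)
    (hv53' : ∀ t : k, v5 ≠ t • v3')
    (hE4a : ∃ s : k, E4 = A3 + s • v5) (hE4b : ∃ t : k, E4 = A5 + t • v3)
    (hEbara : ∃ s : k, E4bar = A3' + s • v3) (hEbarb : ∃ t : k, E4bar = A3 + t • v3')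
    (hE4'a : ∃ s : k, E4' = A3' + s • v5) (hE4'b : ∃ t : k, E4' = A5 + t • v3') :
    Collinear k ({E4, E4bar, E4'} : Set (k × k)) := by
  obtain ⟨s1, h1⟩ := hE4a
  obtain ⟨t1, h2⟩ := hE4b
  obtain ⟨s2, h3⟩ := hEbara
  obtain ⟨t2, h4⟩ := hEbarb
  obtain ⟨s3, h5⟩ := hE4'a
  obtain ⟨t3, h6⟩ := hE4'b
  have hv3 : v3 ≠ 0 := by simpa using hv35 0
  have hv3' : v3' ≠ 0 := by simpa using hv3'3 0
  have hv5 : v5 ≠ 0 := by simpa using hv53' 0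
  have hd1 : v3.1 * v5.2 - v3.2 * v5.1 ≠ 0 := cross_ne_zero_aux v3 v5 hv5 hv35
  have hd2' : v3'.1 * v3.2 - v3'.2 * v3.1 ≠ 0 := cross_ne_zero_aux v3' v3 hv3 hv3'3
  have hd3' : v5.1 * v3'.2 - v5.2 * v3'.1 ≠ 0 := cross_ne_zero_aux v5 v3' hv3' hv53'
  have hd2 : v3.1 * v3'.2 - v3.2 * v3'.1 ≠ 0 := fun h => hd2' (by linear_combination -h)
  have hd3 : v3'.1 * v5.2 - v3'.2 * v5.1 ≠ 0 := fun h => hd3' (by linear_combination -h)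
  rw [collinear_iff_of_mem (Set.mem_insert A3 _)] at hcol
  obtain ⟨u, hu⟩ := hcol
  obtain ⟨α, hA3'⟩ := hu A3' (by simp)
  obtain ⟨β, hA5⟩ := hu A5 (by simp)
  have h1x : E4.1 = A3.1 + s1 * v5.1 := by rw [h1]; rfl
  have h1y : E4.2 = A3.2 + s1 * v5.2 := by rw [h1]; rfl
  have h2x : E4.1 = A5.1 + t1 * v3.1 := by rw [h2]; rfl
  have h2y : E4.2 = A5.2 + t1 * v3.2 := by rw [h2]; rfl
  have h3x : E4bar.1 = A3'.1 + s2 * v3.1 := by rw [h3]; rfl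
  have h3y : E4bar.2 = A3'.2 + s2 * v3.2 := by rw [h3]; rfl
  have h4x : E4bar.1 = A3.1 + t2 * v3'.1 := by rw [h4]; rfl
  have h4y : E4bar.2 = A3.2 + t2 * v3'.2 := by rw [h4]; rfl
  have h5x : E4'.1 = A3'.1 + s3 * v5.1 := by rw [h5]; rfl
  have h5y : E4'.2 = A3'.2 + s3 * v5.2 := by rw [h5]; rfl
  have h6x : E4'.1 = A5.1 + t3 * v3'.1 := by rw [h6]; rfl
  have h6y : E4'.2 = A5.2 + t3 * v3'.2 := by rw [h6]; rfl
  have hA3'x : A3'.1 = A3.1 + α * u.1 := by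
    rw [hA3', vadd_eq_add]; show α * u.1 + A3.1 = _; ring
  have hA3'y : A3'.2 = A3.2 + α * u.2 := by
    rw [hA3', vadd_eq_add]; show α * u.2 + A3.2 = _; ring
  have hA5x : A5.1 = A3.1 + β * u.1 := by
    rw [hA5, vadd_eq_add]; show β * u.1 + A3.1 = _; ring
  have hA5y : A5.2 = A3.2 + β * u.2 := by
    rw [hA5, vadd_eq_add]; show β * u.2 + A3.2 = _; ring
  have eq1 : s1 * (v3.1 * v5.2 - v3.2 * v5.1) = β * (v3.1 * u.2 - v3.2 * u.1) := by
    linear_combination -v3.1 * h1y + v3.1 * h2y + v3.1 * hA5y + v3.2 * h1x - v3.2 * h2x -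
      v3.2 * hA5x
  have eq2 : t2 * (v3.1 * v3'.2 - v3.2 * v3'.1) = α * (v3.1 * u.2 - v3.2 * u.1) := by
    linear_combination -v3.1 * h4y + v3.1 * h3y + v3.1 * hA3'y + v3.2 * h4x - v3.2 * h3x -
      v3.2 * hA3'x
  have eq3 : s3 * (v3'.1 * v5.2 - v3'.2 * v5.1) = (β - α) * (v3'.1 * u.2 - v3'.2 * u.1) := by
    linear_combination -v3'.1 * h5y + v3'.1 * h6y + v3'.1 * hA5y - v3'.1 * hA3'y +
      v3'.2 * h5x - v3'.2 * h6x - v3'.2 * hA5x + v3'.2 * hA3'x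
  have hs1 : s1 = β * (v3.1 * u.2 - v3.2 * u.1) / (v3.1 * v5.2 - v3.2 * v5.1) := by
    field_simp
    linear_combination eq1
  have ht2 : t2 = α * (v3.1 * u.2 - v3.2 * u.1) / (v3.1 * v3'.2 - v3.2 * v3'.1) := by
    field_simp
    linear_combination eq2
  have hs3 : s3 = (β - α) * (v3'.1 * u.2 - v3'.2 * u.1) / (v3'.1 * v5.2 - v3'.2 * v5.1) := by
    field_simp
    linear_combination eq3
  apply collinear_of_cross
  rw [h1x, h1y, h4x, h4y, h5x, h5y, hA3'x, hA3'y, hs1, ht2, hs3]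
  field_simp
  ring
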